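/- Let r ≥ 0 be an integer, let (H^d)_{d ≥ 0} be a family of finite-dimensional ℚ-vector spaces, and let η, β : H^d → H^{d+2} (for all d) be linear maps with η∘β = β∘η. Suppose given: (1) subspaces Q^{i,a;d} ⊆ H^d for 0 ≤ i ≤ r, 0 ≤ a ≤ r−i, d ≥ 0, such that H^d = ⊕_{i,a} Q^{i,a;d}; define P_k H^d = ⊕_{i+2a ≤ k} Q^{i,a;d}; (2) η(Q^{i,a;d}) = Q^{i,a+1;d+2} whenever 0 ≤ a < r−i; (3) for all k, d: if v ∈ P_k H^d and η^{r−k+1} v = 0, then v ∈ Q^{k,0;d}; (4) β(P_k H^d) ⊆ P_k H^{d+2} for all k, d; (5) subspaces V^{i,j} ⊆ P_i H^{i+j} for 0 ≤ i, j ≤ r with η^{r−i+1} V^{i,j} = 0 and β^{r−j+1} V^{i,j} = 0, such that for every d one has the internal direct sum decomposition H^d = ⊕ η^a β^b V^{i,j}, the sum ranging over 0 ≤ a ≤ r−i, 0 ≤ b ≤ r−j, 2a + 2b + i + j = d. Then for all k, d: P_k H^d = ⊕ η^a β^b V^{i,j}, the sum ranging over the same indices with the additional constraint 2a + i ≤ k.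 -/
import Mathlib

/-- The filtration `P_k H^d = ⊕_{i + 2a ≤ k} Q^{i,a;d}` defined from a Deligne-type
splitting `Q`. -/
def Pfil {W : Type*} [AddCommGroup W] [Module ℚ W]
    (Q : ℕ → ℕ → ℕ → Submodule ℚ W) (k d : ℕ) : Submodule ℚ W :=
  ⨆ (i : ℕ) (a : ℕ) (_ : i + 2 * a ≤ k), Q i a d

/-- If `f` is an independent family of submodules, `g p ≤ f p` pointwise, and
`⨆ f ≤ ⨆ g`, then `f p ≤ g p` for every `p`. -/
lemma aux_eq_of_le {R M ι : Type*} [Ring R] [AddCommGroup M] [Module R M]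
    (f g : ι → Submodule R M) (hind : iSupIndep f) (hle : ∀ p, g p ≤ f p)
    (hsup : (⨆ p, f p) ≤ ⨆ p, g p) : ∀ p, f p ≤ g p := by
  intro p x hx
  have hx2 : x ∈ ⨆ q, g q := hsup (le_iSup f p hx)
  have hsplit : (⨆ q, g q) ≤ g p ⊔ ⨆ (q) (_ : q ≠ p), g q := by
    refine iSup_le fun q => ?_
    by_cases h : q = p
    · subst h; exact le_sup_left
    · exact le_sup_of_le_right (le_iSup_of_le q (le_iSup_of_le h le_rfl))
  obtain ⟨s, hs, t, ht, hst⟩ := Submodule.mem_sup.mp (hsplit hx2)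
  have htf : t ∈ ⨆ (q) (_ : q ≠ p), f q :=
    (iSup_mono fun q => iSup_mono fun _ => hle q) ht
  have htp : t ∈ f p := by
    have h' : t = x - s := by rw [← hst]; abel
    rw [h']; exact sub_mem hx (hle p hs)
  have ht0 : t = 0 := (Submodule.disjoint_def.mp (hind p)) t htp htf
  have hxs : x = s := by rw [← hst, ht0, add_zero]
  rw [hxs]; exact hs

/-- Abstract content of Proposition 1.2(b): given Deligne's splitting `Q^{i,a;d}` of the
filtration `P` associated with `η` (with its characterizing properties (1)-(3)), if `β`
preserves `P` and the subspaces `V^{i,j} ⊆ P_i H^{i+j}` give a primitive decomposition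
`H^d = ⊕ η^a β^b V^{i,j}`, then this decomposition splits the filtration:
`P_k H^d = ⊕_{2a + i ≤ k} η^a β^b V^{i,j}`. -/
theorem stmt6 (r : ℕ) (W : Type*) [AddCommGroup W] [Module ℚ W]
    (Hgr : ℕ → Submodule ℚ W)
    (hfin : ∀ d, FiniteDimensional ℚ (Hgr d))
    (η β : Module.End ℚ W)
    (hcomm : η * β = β * η)
    (hηH : ∀ d, (Hgr d).map η ≤ Hgr (d + 2))
    (hβH : ∀ d, (Hgr d).map β ≤ Hgr (d + 2))
    (Q : ℕ → ℕ → ℕ → Submodule ℚ W)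
    (hQle : ∀ i a d, Q i a d ≤ Hgr d)
    (hQzero : ∀ i a d, ¬(i ≤ r ∧ a ≤ r - i) → Q i a d = ⊥)
    (hQsum : ∀ d, Hgr d = ⨆ p : ℕ × ℕ, Q p.1 p.2 d)
    (hQind : ∀ d, iSupIndep fun p : ℕ × ℕ => Q p.1 p.2 d)
    (h2 : ∀ i a d, i ≤ r → a < r - i → (Q i a d).map η = Q i (a + 1) (d + 2))
    (h3 : ∀ k d, k ≤ r → ∀ v ∈ Pfil Q k d, (η ^ (r - k + 1)) v = 0 → v ∈ Q k 0 d)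
    (h4 : ∀ k d, (Pfil Q k d).map β ≤ Pfil Q k (d + 2))
    (V : ℕ → ℕ → Submodule ℚ W)
    (hVP : ∀ i j, i ≤ r → j ≤ r → V i j ≤ Pfil Q i (i + j))
    (hVη : ∀ i j, i ≤ r → j ≤ r → ∀ v ∈ V i j, (η ^ (r - i + 1)) v = 0)
    (hVβ : ∀ i j, i ≤ r → j ≤ r → ∀ v ∈ V i j, (β ^ (r - j + 1)) v = 0)
    (hVsum : ∀ d, Hgr d = ⨆ (i : ℕ) (j : ℕ) (a : ℕ) (b : ℕ)
      (_ : i ≤ r) (_ : j ≤ r) (_ : a ≤ r - i) (_ : b ≤ r - j)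
      (_ : 2 * a + 2 * b + i + j = d), (V i j).map (η ^ a * β ^ b))
    (hVind : iSupIndep fun t : ℕ × ℕ × ℕ × ℕ =>
      if t.1 ≤ r ∧ t.2.1 ≤ r ∧ t.2.2.1 ≤ r - t.1 ∧ t.2.2.2 ≤ r - t.2.1
      then (V t.1 t.2.1).map (η ^ t.2.2.1 * β ^ t.2.2.2) else ⊥) :
    ∀ k d : ℕ, Pfil Q k d = ⨆ (i : ℕ) (j : ℕ) (a : ℕ) (b : ℕ)
      (_ : i ≤ r) (_ : j ≤ r) (_ : a ≤ r - i) (_ : b ≤ r - j)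
      (_ : 2 * a + 2 * b + i + j = d) (_ : 2 * a + i ≤ k),
      (V i j).map (η ^ a * β ^ b) := by
  have hc : Commute η β := hcomm
  -- Key A: each piece lies in the corresponding Q
  have keyA : ∀ i j a b d, i ≤ r → j ≤ r → a ≤ r - i → b ≤ r - j →
      2 * a + 2 * b + i + j = d → (V i j).map (η ^ a * β ^ b) ≤ Q i a d := by
    intro i j a b d hi hj ha hb hd
    rintro _ ⟨v, hv, rfl⟩
    -- β^b v ∈ Pfil Q i (i+j+2b)
    have hP : ∀ b' : ℕ, (β ^ b') v ∈ Pfil Q i (i + j + 2 * b') := by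
      intro b'
      induction b' with
      | zero => simpa using hVP i j hi hj hv
      | succ n ih =>
        have h' : β ((β ^ n) v) ∈ Pfil Q i (i + j + 2 * n + 2) :=
          h4 i (i + j + 2 * n) ⟨(β ^ n) v, ih, rfl⟩
        have he : i + j + 2 * (n + 1) = i + j + 2 * n + 2 := by ring
        rw [he, pow_succ']
        simpa using h'
    -- η^{r-i+1} (β^b v) = 0
    have hker : (η ^ (r - i + 1)) ((β ^ b) v) = 0 := by
      have hcp : η ^ (r - i + 1) * β ^ b = β ^ b * η ^ (r - i + 1) :=
        (hc.pow_pow _ _)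
      have : (η ^ (r - i + 1)) ((β ^ b) v) = (β ^ b) ((η ^ (r - i + 1)) v) := by
        have := congrArg (fun f : Module.End ℚ W => f v) hcp
        simpa using this
      rw [this, hVη i j hi hj v hv, map_zero]
    have hq0 : (β ^ b) v ∈ Q i 0 (i + j + 2 * b) :=
      h3 i (i + j + 2 * b) hi _ (hP b) hker
    -- η^a maps Q i 0 into Q i a
    have hstep : ∀ a' : ℕ, a' ≤ r - i → ∀ d0 : ℕ, ∀ x ∈ Q i 0 d0,
        (η ^ a') x ∈ Q i a' (d0 + 2 * a') := by
      intro a'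
      induction a' with
      | zero => intro _ d0 x hx; simpa using hx
      | succ n ih =>
        intro hn d0 x hx
        have hn' : n < r - i := by omega
        have hmem : (η ^ n) x ∈ Q i n (d0 + 2 * n) := ih (by omega) d0 x hx
        have h' : η ((η ^ n) x) ∈ Q i (n + 1) (d0 + 2 * n + 2) := by
          rw [← h2 i n (d0 + 2 * n) hi hn']
          exact ⟨(η ^ n) x, hmem, rfl⟩
        have he : d0 + 2 * (n + 1) = d0 + 2 * n + 2 := by ring
        rw [he, pow_succ']
        simpa using h'
    have hm : (η ^ a) ((β ^ b) v) ∈ Q i a (i + j + 2 * b + 2 * a) :=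
      hstep a ha _ _ hq0
    have hde : d = i + j + 2 * b + 2 * a := by omega
    rw [hde]
    simpa using hm
  intro k d
  -- the "S" family indexed like Q
  set S : ℕ × ℕ → Submodule ℚ W := fun p =>
    ⨆ (j : ℕ) (b : ℕ) (_ : p.1 ≤ r) (_ : j ≤ r) (_ : p.2 ≤ r - p.1)
      (_ : b ≤ r - j) (_ : 2 * p.2 + 2 * b + p.1 + j = d),
      (V p.1 j).map (η ^ p.2 * β ^ b) with hSdef
  have hSQ : ∀ p, S p ≤ Q p.1 p.2 d := by
    intro p
    refine iSup_le fun j => iSup_le fun b => iSup_le fun hi => iSup_le fun hj =>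
      iSup_le fun ha => iSup_le fun hb => iSup_le fun hd => ?_
    exact keyA p.1 j p.2 b d hi hj ha hb hd
  have hsup : (⨆ p : ℕ × ℕ, Q p.1 p.2 d) ≤ ⨆ p, S p := by
    rw [← hQsum d, hVsum d]
    refine iSup_le fun i => iSup_le fun j => iSup_le fun a => iSup_le fun b =>
      iSup_le fun hi => iSup_le fun hj => iSup_le fun ha => iSup_le fun hb =>
      iSup_le fun hd => ?_
    refine le_trans ?_ (le_iSup S (i, a))
    exact le_iSup_of_le j (le_iSup_of_le b (le_iSup_of_le hi (le_iSup_of_le hj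
      (le_iSup_of_le ha (le_iSup_of_le hb (le_iSup_of_le hd le_rfl))))))
  have hQS : ∀ p : ℕ × ℕ, Q p.1 p.2 d ≤ S p :=
    aux_eq_of_le _ S (hQind d) hSQ hsup
  apply le_antisymm
  · -- Pfil ≤ RHS
    refine iSup_le fun i => iSup_le fun a => iSup_le fun hia => ?_
    by_cases hcase : i ≤ r ∧ a ≤ r - i
    · refine le_trans (hQS (i, a)) ?_
      refine iSup_le fun j => iSup_le fun b => iSup_le fun hi => iSup_le fun hj =>
        iSup_le fun ha => iSup_le fun hb => iSup_le fun hd => ?_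
      exact le_iSup_of_le i (le_iSup_of_le j (le_iSup_of_le a (le_iSup_of_le b
        (le_iSup_of_le hi (le_iSup_of_le hj (le_iSup_of_le ha (le_iSup_of_le hb
        (le_iSup_of_le hd (le_iSup_of_le (by omega) le_rfl)))))))))
    · rw [hQzero i a d hcase]; exact bot_le
  · -- RHS ≤ Pfil
    refine iSup_le fun i => iSup_le fun j => iSup_le fun a => iSup_le fun b =>
      iSup_le fun hi => iSup_le fun hj => iSup_le fun ha => iSup_le fun hb =>
      iSup_le fun hd => iSup_le fun hk => ?_
    refine le_trans (keyA i j a b d hi hj ha hb hd) ?_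
    exact le_iSup_of_le i (le_iSup_of_le a (le_iSup_of_le (by omega) le_rfl))
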